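/- Let A be a commutative ring, F ∈ A[y] monic of degree d with d invertible, N a divisor of d, and φ ∈ A[y] monic of degree d/N with φ-adic expansion F = Σ_{i=0}^{N} a_i φ^i. Define the Tschirnhausen transform τ_F(φ) := φ + a_{N−1}/N. Then the τ_F(φ)-adic expansion F = Σ a'_i τ_F(φ)^i satisfies deg(a'_{N−1}) < deg(a_{N−1}) whenever a_{N−1} ≠ 0. In particular, after at most d/N iterations of τ_F starting from any monic φ of degree d/N, one obtains the N-th approximate root of F. -/

import Mathlib

namespace TschirnAux

open Polynomial Finset

variable {A : Type*} [CommRing A]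

/-- `Q F φ M` is the coefficient `a_{N-1}` (N = M+1) of the `φ`-adic expansion of `F`. -/
noncomputable def Q (F φ : Polynomial A) (M : ℕ) : Polynomial A :=
  (F - φ ^ (M + 1)) /ₘ φ ^ M

lemma degree_sum_lt {ι : Type*} {s : Finset ι} {f : ι → Polynomial A} {c : ℕ}
    (h : ∀ i ∈ s, (f i).degree < (c : WithBot ℕ)) :
    (∑ i ∈ s, f i).degree < (c : WithBot ℕ) := by
  refine lt_of_le_of_lt (degree_sum_le s f) ?_
  rw [Finset.sup_lt_iff (by exact_mod_cast WithBot.bot_lt_coe c)]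
  exact h

lemma degree_term_le {x y : Polynomial A} {mx my : ℕ}
    (hx : x.natDegree ≤ mx) (hy : y.natDegree ≤ my) (i j c : ℕ) :
    (x ^ i * y ^ j * (c : Polynomial A)).degree ≤ ((i * mx + j * my : ℕ) : WithBot ℕ) := by
  refine le_trans (degree_le_natDegree) ?_
  have h1 : (x ^ i * y ^ j * (c : Polynomial A)).natDegree ≤ i * mx + j * my := by
    calc (x ^ i * y ^ j * (c : Polynomial A)).natDegree
        ≤ (x ^ i * y ^ j).natDegree + (c : Polynomial A).natDegree := natDegree_mul_le
      _ ≤ (x ^ i).natDegree + (y ^ j).natDegree + 0 := by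
          gcongr
          · exact natDegree_mul_le
          · exact le_of_eq (natDegree_natCast c)
      _ ≤ i * x.natDegree + j * y.natDegree + 0 := by
          gcongr <;> exact natDegree_pow_le
      _ ≤ i * mx + j * my := by
          simp only [add_zero]; gcongr
  exact_mod_cast h1

lemma deg_div_lt [Nontrivial A] {p s : Polynomial A} (hs : s.Monic) {c : ℕ}
    (h : p.degree < s.degree + (c : ℕ)) : (p /ₘ s).degree < (c : WithBot ℕ) := by
  by_cases h0 : p /ₘ s = 0
  · rw [h0, degree_zero]
    exact_mod_cast WithBot.bot_lt_coe c
  · have hmul : (p /ₘ s) * s = p - p %ₘ s := by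
      have h1 := modByMonic_add_div p s
      linear_combination h1
    have hdeg : (p /ₘ s).degree + s.degree = (p - p %ₘ s).degree := by
      rw [← hs.degree_mul, hmul]
    have hlt : (p - p %ₘ s).degree < s.degree + (c : ℕ) := by
      refine lt_of_le_of_lt (degree_sub_le _ _) (max_lt h ?_)
      refine lt_of_lt_of_le (degree_modByMonic_lt p hs) ?_
      exact le_add_of_nonneg_right (by exact_mod_cast Nat.zero_le c)
    rw [← hdeg] at hlt
    have hsd : s.degree = (s.natDegree : WithBot ℕ) := degree_eq_natDegree hs.ne_zero
    rw [hsd, add_comm ((p /ₘ s).degree) _, add_comm (((s.natDegree : ℕ)) : WithBot ℕ) _] at hlt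
    rw [add_comm] at hlt
    exact (WithBot.add_lt_add_iff_left (by exact_mod_cast (WithBot.coe_ne_bot))).mp hlt

section Core

variable [Nontrivial A] {F : Polynomial A} {M m : ℕ}

lemma degree_pow_monic {φ : Polynomial A} (hφ : φ.Monic) (hφd : φ.natDegree = m) (n : ℕ) :
    (φ ^ n).degree = ((n * m : ℕ) : WithBot ℕ) := by
  rw [degree_eq_natDegree (hφ.pow n).ne_zero, hφ.natDegree_pow, hφd]

lemma degree_F_sub_pow (hF : F.Monic) (hdF : F.natDegree = (M + 1) * m)
    {φ : Polynomial A} (hφ : φ.Monic) (hφd : φ.natDegree = m) :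
    (F - φ ^ (M + 1)).degree < (((M + 1) * m : ℕ) : WithBot ℕ) := by
  have hdF' : F.degree = (((M + 1) * m : ℕ) : WithBot ℕ) := by
    rw [degree_eq_natDegree hF.ne_zero, hdF]
  have hp : (φ ^ (M + 1)).degree = (((M + 1) * m : ℕ) : WithBot ℕ) :=
    degree_pow_monic hφ hφd (M + 1)
  calc (F - φ ^ (M + 1)).degree < F.degree := by
        refine degree_sub_lt (hdF'.trans hp.symm) hF.ne_zero ?_
        rw [hF.leadingCoeff, (hφ.pow (M + 1)).leadingCoeff]
    _ = _ := hdF'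

lemma degree_Q_lt (hF : F.Monic) (hdF : F.natDegree = (M + 1) * m)
    {φ : Polynomial A} (hφ : φ.Monic) (hφd : φ.natDegree = m) :
    (Q F φ M).degree < (m : WithBot ℕ) := by
  refine deg_div_lt (hφ.pow M) ?_
  rw [degree_pow_monic hφ hφd M]
  have : (((M + 1) * m : ℕ) : WithBot ℕ) = ((M * m : ℕ) : WithBot ℕ) + (m : ℕ) := by
    rw [← Nat.cast_add]
    norm_cast
    ring
  rw [← this]
  exact degree_F_sub_pow hF hdF hφ hφd

lemma mod_div_eq_Q (hF : F.Monic) (hdF : F.natDegree = (M + 1) * m)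
    {φ : Polynomial A} (hφ : φ.Monic) (hφd : φ.natDegree = m) :
    (F /ₘ φ ^ M) %ₘ φ = Q F φ M := by
  have h1 := modByMonic_add_div (F - φ ^ (M + 1)) (φ ^ M)
  have h2 : F /ₘ φ ^ M = φ + Q F φ M := by
    refine (div_modByMonic_unique (φ + Q F φ M) ((F - φ ^ (M + 1)) %ₘ φ ^ M) (hφ.pow M)
      ⟨?_, degree_modByMonic_lt _ (hφ.pow M)⟩).1
    unfold Q
    linear_combination h1
  have h3 : (φ + Q F φ M) %ₘ φ = Q F φ M := by
    refine (div_modByMonic_unique 1 (Q F φ M) hφ ⟨by ring, ?_⟩).2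
    rw [degree_eq_natDegree hφ.ne_zero, hφd]
    exact degree_Q_lt hF hdF hφ hφd
  rw [h2, h3]

lemma Q_eq_zero_iff (hF : F.Monic) {φ : Polynomial A} (hφ : φ.Monic) (hφd : φ.natDegree = m) :
    Q F φ M = 0 ↔ (F - φ ^ (M + 1)).degree < ((M * m : ℕ) : WithBot ℕ) := by
  unfold Q
  rw [divByMonic_eq_zero_iff (hφ.pow M), degree_pow_monic hφ hφd M]

lemma key_step (hF : F.Monic) (hdF : F.natDegree = (M + 1) * m)
    {φ : Polynomial A} (hφ : φ.Monic) (hφd : φ.natDegree = m)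
    {u : A} (hu : ((M + 1 : ℕ) : A) * u = 1) :
    (φ + C u * Q F φ M).Monic ∧ (φ + C u * Q F φ M).natDegree = m ∧
      (Q F φ M ≠ 0 →
        (Q F (φ + C u * Q F φ M) M).degree < (Q F φ M).degree) := by
  set q : Polynomial A := Q F φ M with hq_def
  set b : Polynomial A := C u * q with hb_def
  set ψ : Polynomial A := φ + b with hψ_def
  have hqm : q.degree < (m : WithBot ℕ) := degree_Q_lt hF hdF hφ hφd
  have hbq : b.degree ≤ q.degree := by
    calc b.degree ≤ (C u).degree + q.degree := degree_mul_le _ _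
      _ ≤ 0 + q.degree := add_le_add degree_C_le le_rfl
      _ = q.degree := zero_add _
  have hbm : b.degree < (m : WithBot ℕ) := lt_of_le_of_lt hbq hqm
  have hφdeg : φ.degree = (m : WithBot ℕ) := by
    rw [degree_eq_natDegree hφ.ne_zero, hφd]
  have hψM : ψ.Monic := hφ.add_of_left (by rwa [hφdeg])
  have hψdeg : ψ.degree = (m : WithBot ℕ) := by
    rw [hψ_def, degree_add_eq_left_of_degree_lt (by rwa [hφdeg]), hφdeg]
  have hψd : ψ.natDegree = m := natDegree_eq_of_degree_eq_some hψdeg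
  refine ⟨hψM, hψd, ?_⟩
  intro hq0
  set k : ℕ := q.natDegree with hk_def
  have hqdeg : q.degree = (k : WithBot ℕ) := degree_eq_natDegree hq0
  have hkm : k < m := by
    rw [hqdeg] at hqm; exact_mod_cast hqm
  have hbk : b.natDegree ≤ k := by
    rw [natDegree_le_iff_degree_le]
    exact le_trans hbq (le_of_eq hqdeg)
  have hbk' : (-b).natDegree ≤ k := by rwa [natDegree_neg]
  set r : Polynomial A := (F - φ ^ (M + 1)) %ₘ φ ^ M with hr_def
  have h1 : r + φ ^ M * q = F - φ ^ (M + 1) := modByMonic_add_div _ (φ ^ M)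
  have hrd : r.degree < ((M * m : ℕ) : WithBot ℕ) := by
    have := degree_modByMonic_lt (F - φ ^ (M + 1)) (hφ.pow M)
    rwa [degree_pow_monic hφ hφd M] at this
  have hq_b : ((M + 1 : ℕ) : Polynomial A) * b = q := by
    have hcu : ((M + 1 : ℕ) : Polynomial A) * C u = 1 := by
      rw [← C_eq_natCast, ← C_mul, hu, C_1]
    rw [hb_def, ← mul_assoc, hcu, one_mul]
  set S1 : Polynomial A :=
    ∑ j ∈ range M, ψ ^ j * (-b) ^ (M + 1 - j) * ((M + 1).choose j : Polynomial A) with hS1_def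
  set S2 : Polynomial A :=
    ∑ j ∈ range M, ψ ^ j * (-b) ^ (M - j) * (M.choose j : Polynomial A) with hS2_def
  have hbinom1 : (ψ - b) ^ (M + 1)
      = S1 + ψ ^ M * (-b) * ((M + 1 : ℕ) : Polynomial A) + ψ ^ (M + 1) := by
    have h := add_pow ψ (-b) (M + 1)
    rw [show ψ - b = ψ + (-b) by ring] at *
    rw [h, sum_range_succ, sum_range_succ]
    have e1 : M + 1 - M = 1 := by omega
    have e2 : M + 1 - (M + 1) = 0 := by omega
    rw [e1, e2, Nat.choose_self, Nat.choose_succ_self_right, pow_zero, pow_one]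
    push_cast
    ring
  have hbinom2 : (ψ - b) ^ M = S2 + ψ ^ M := by
    have h := add_pow ψ (-b) M
    rw [show ψ - b = ψ + (-b) by ring] at *
    rw [h, sum_range_succ, Nat.sub_self, Nat.choose_self, pow_zero]
    push_cast
    ring
  have hFid : F - ψ ^ (M + 1) = S1 + S2 * q + r := by
    have hφψ : φ = ψ - b := by rw [hψ_def]; ring
    have hF2 : F = (ψ - b) ^ (M + 1) + (ψ - b) ^ M * q + r := by
      rw [← hφψ]; linear_combination -h1
    linear_combination hF2 + hbinom1 + q * hbinom2 - ψ ^ M * hq_b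
  have hψn : ψ.natDegree ≤ m := le_of_eq hψd
  have hS1d : S1.degree < ((M * m + k : ℕ) : WithBot ℕ) := by
    rw [hS1_def]
    refine degree_sum_lt ?_
    intro j hj
    rw [Finset.mem_range] at hj
    refine lt_of_le_of_lt (degree_term_le hψn hbk' j (M + 1 - j) _) ?_
    rw [Nat.cast_lt]
    obtain ⟨t, ht⟩ : ∃ t, M = j + t + 1 := ⟨M - j - 1, by omega⟩
    have e : M + 1 - j = t + 2 := by omega
    rw [e, ht]
    have := Nat.mul_le_mul_left t hkm.le
    nlinarith
  have hS2d : (S2 * q).degree < ((M * m + k : ℕ) : WithBot ℕ) := by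
    rw [hS2_def, Finset.sum_mul]
    refine degree_sum_lt ?_
    intro j hj
    rw [Finset.mem_range] at hj
    refine lt_of_le_of_lt (degree_mul_le _ _) ?_
    have h2 : (ψ ^ j * (-b) ^ (M - j) * (M.choose j : Polynomial A)).degree
        ≤ ((j * m + (M - j) * k : ℕ) : WithBot ℕ) := degree_term_le hψn hbk' j (M - j) _
    calc (ψ ^ j * (-b) ^ (M - j) * (M.choose j : Polynomial A)).degree + q.degree
        ≤ ((j * m + (M - j) * k : ℕ) : WithBot ℕ) + ((k : ℕ) : WithBot ℕ) := by
          refine add_le_add h2 (le_of_eq hqdeg)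
      _ = ((j * m + (M - j) * k + k : ℕ) : WithBot ℕ) := by rw [← Nat.cast_add]
      _ < ((M * m + k : ℕ) : WithBot ℕ) := by
          rw [Nat.cast_lt]
          obtain ⟨t, ht⟩ : ∃ t, M = j + t + 1 := ⟨M - j - 1, by omega⟩
          have e : M - j = t + 1 := by omega
          rw [e, ht]
          have := Nat.mul_le_mul_left t hkm.le
          nlinarith
  have hrd' : r.degree < ((M * m + k : ℕ) : WithBot ℕ) :=
    lt_of_lt_of_le hrd (by rw [Nat.cast_le]; omega)
  have hdegF : (F - ψ ^ (M + 1)).degree < ((M * m + k : ℕ) : WithBot ℕ) := by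
    rw [hFid]
    refine lt_of_le_of_lt (degree_add_le _ _) (max_lt ?_ hrd')
    exact lt_of_le_of_lt (degree_add_le _ _) (max_lt hS1d hS2d)
  have hfinal : (Q F ψ M).degree < (k : WithBot ℕ) := by
    refine deg_div_lt (hψM.pow M) ?_
    rw [degree_pow_monic hψM hψd M, ← Nat.cast_add]
    exact hdegF
  rwa [hqdeg]

lemma coeff_extract (hF : F.Monic) (hdF : F.natDegree = (M + 1) * m) (hm : 1 ≤ m)
    {φ : Polynomial A} (hφ : φ.Monic) (hφd : φ.natDegree = m)
    (a : ℕ → Polynomial A)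
    (ha : F = ∑ i ∈ range (M + 1 + 1), a i * φ ^ i)
    (hai : ∀ i, (a i).degree < (m : WithBot ℕ)) :
    a M = Q F φ M := by
  have hterm : ∀ i, (a i * φ ^ i).degree < (((i + 1) * m : ℕ) : WithBot ℕ) := by
    intro i
    by_cases h0 : a i = 0
    · rw [h0, zero_mul, degree_zero]
      exact_mod_cast WithBot.bot_lt_coe _
    · rw [(hφ.pow i).degree_mul, degree_pow_monic hφ hφd i]
      calc (a i).degree + ((i * m : ℕ) : WithBot ℕ)
          < (m : WithBot ℕ) + ((i * m : ℕ) : WithBot ℕ) := by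
            refine WithBot.add_lt_add_right ?_ (hai i)
            exact_mod_cast WithBot.coe_ne_bot
        _ = (((i + 1) * m : ℕ) : WithBot ℕ) := by
            rw [← Nat.cast_add]; norm_cast; ring
  have hsum : ∀ K : ℕ, (∑ i ∈ range K, a i * φ ^ i).degree < ((K * m : ℕ) : WithBot ℕ) := by
    intro K
    refine degree_sum_lt ?_
    intro i hi
    rw [Finset.mem_range] at hi
    refine lt_of_lt_of_le (hterm i) ?_
    rw [Nat.cast_le]
    have : i + 1 ≤ K := hi
    exact Nat.mul_le_mul_right m this
  -- identify the top coefficient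
  have hsplit : F = (∑ i ∈ range (M + 1), a i * φ ^ i) + a (M + 1) * φ ^ (M + 1) := by
    rw [ha, sum_range_succ]
  have hStop : (∑ i ∈ range (M + 1), a i * φ ^ i).degree < (((M + 1) * m : ℕ) : WithBot ℕ) :=
    hsum (M + 1)
  have hFdeg : F.degree = (((M + 1) * m : ℕ) : WithBot ℕ) := by
    rw [degree_eq_natDegree hF.ne_zero, hdF]
  have hFS : (F - ∑ i ∈ range (M + 1), a i * φ ^ i).Monic :=
    hF.sub_of_left (by rw [hFdeg]; exact hStop)
  have hFSd : (F - ∑ i ∈ range (M + 1), a i * φ ^ i).degree = (((M + 1) * m : ℕ) : WithBot ℕ) := by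
    rw [degree_sub_eq_left_of_degree_lt (by rw [hFdeg]; exact hStop), hFdeg]
  have haN : a (M + 1) * φ ^ (M + 1) = F - ∑ i ∈ range (M + 1), a i * φ ^ i := by
    linear_combination -hsplit
  have hmonicTop : (a (M + 1) * φ ^ (M + 1)).Monic := haN ▸ hFS
  have hlc : (a (M + 1)).leadingCoeff = 1 := by
    have := leadingCoeff_mul_monic (p := a (M + 1)) (hφ.pow (M + 1))
    rw [hmonicTop.leadingCoeff] at this
    exact this.symm
  have hane : a (M + 1) ≠ 0 := by
    intro h
    rw [h, leadingCoeff_zero] at hlc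
    exact zero_ne_one hlc
  have hadeg0 : (a (M + 1)).degree ≤ 0 := by
    have e1 : (a (M + 1)).degree + (((M + 1) * m : ℕ) : WithBot ℕ)
        = (((M + 1) * m : ℕ) : WithBot ℕ) := by
      have e0 : (a (M + 1)).degree + (φ ^ (M + 1)).degree = (((M + 1) * m : ℕ) : WithBot ℕ) := by
        rw [← (hφ.pow (M + 1)).degree_mul, haN, hFSd]
      rwa [degree_pow_monic hφ hφd (M + 1)] at e0
    have e2 : (a (M + 1)).degree + (((M + 1) * m : ℕ) : WithBot ℕ)
        = 0 + (((M + 1) * m : ℕ) : WithBot ℕ) := by rw [e1, zero_add]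
    have := WithBot.add_right_cancel (by exact_mod_cast WithBot.coe_ne_bot) e2
    exact le_of_eq this
  have haC : a (M + 1) = 1 := by
    have h1 : a (M + 1) = C ((a (M + 1)).coeff 0) := eq_C_of_degree_le_zero hadeg0
    have h2 : (a (M + 1)).natDegree = 0 := natDegree_eq_zero_iff_degree_le_zero.mpr hadeg0
    have h3 : (a (M + 1)).coeff 0 = 1 := by
      rw [← h2]; exact hlc
    rw [h1, h3, C_1]
  -- now extract a M
  have hsplit2 : F = (∑ i ∈ range M, a i * φ ^ i) + a M * φ ^ M + φ ^ (M + 1) := by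
    rw [ha, sum_range_succ, sum_range_succ, haC, one_mul]
  have hRd : (∑ i ∈ range M, a i * φ ^ i).degree < (φ ^ M).degree := by
    rw [degree_pow_monic hφ hφd M]
    exact hsum M
  have hdiv : (F - φ ^ (M + 1)) /ₘ φ ^ M = a M :=
    (div_modByMonic_unique (a M) (∑ i ∈ range M, a i * φ ^ i) (hφ.pow M)
      ⟨by linear_combination -hsplit2, hRd⟩).1
  show a M = (F - φ ^ (M + 1)) /ₘ φ ^ M
  exact hdiv.symm

end Core

end TschirnAux

open Finset Polynomial in
/-- The Tschirnhausen transform `τ_F(φ) = φ + a_{N-1}/N` strictly decreases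
the degree of the coefficient of index `N - 1` in the adic expansion (when it is nonzero),
and after at most `d / N` iterations starting from any monic `φ` of degree `d / N` one
reaches the `N`-th approximate root of `F`.  Here the coefficient `a_{N-1}` of the `φ`-adic
expansion is computed as `(F /ₘ φ ^ (N-1)) %ₘ φ`, and `u` is the inverse of `N` in `A`. -/
theorem tschirnhausen_decreases_and_reaches_approximate_root {A : Type*} [CommRing A]
    (F : Polynomial A) (d N : ℕ) (hF : F.Monic) (hdeg : F.natDegree = d)
    (hd : IsUnit (d : A)) (hN : N ∣ d) (hNpos : 0 < N)
    (u : A) (hu : (N : A) * u = 1)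
    (T : Polynomial A → Polynomial A)
    (hT : ∀ φ : Polynomial A, T φ = φ + Polynomial.C u * ((F /ₘ (φ ^ (N - 1))) %ₘ φ)) :
    (∀ φ : Polynomial A, φ.Monic → φ.natDegree = d / N →
      ∀ a a' : ℕ → Polynomial A,
        F = ∑ i ∈ range (N + 1), a i * φ ^ i →
        (∀ i, (a i).degree < ((d / N : ℕ) : WithBot ℕ)) →
        F = ∑ i ∈ range (N + 1), a' i * (T φ) ^ i →
        (∀ i, (a' i).degree < ((d / N : ℕ) : WithBot ℕ)) →
        a (N - 1) ≠ 0 →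
        (a' (N - 1)).degree < (a (N - 1)).degree) ∧
    (∀ φ : Polynomial A, φ.Monic → φ.natDegree = d / N →
      ∃ n ≤ d / N,
        (T^[n] φ).Monic ∧ (T^[n] φ).natDegree = d / N ∧
        (F - (T^[n] φ) ^ N).degree < ((d - d / N : ℕ) : WithBot ℕ)) := by
  rcases subsingleton_or_nontrivial A with hA | hA
  · constructor
    · intro φ _ _ a a' _ _ _ _ hne
      exact absurd (Subsingleton.elim _ _) hne
    · intro φ hφ hφd
      refine ⟨0, Nat.zero_le _, ?_, ?_, ?_⟩
      · simpa using hφ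
      · simpa using hφd
      · have h0 : F - (T^[0] φ) ^ N = 0 := Subsingleton.elim _ _
        rw [h0, Polynomial.degree_zero]
        exact_mod_cast WithBot.bot_lt_coe _
  · obtain ⟨M, rfl⟩ : ∃ M, N = M + 1 := ⟨N - 1, by omega⟩
    set m := d / (M + 1) with hm_def
    have hdm : (M + 1) * m = d := Nat.mul_div_cancel' hN
    have hm : 1 ≤ m := by
      by_contra h
      have hm0 : m = 0 := Nat.eq_zero_of_not_pos h
      have hd0 : d = 0 := by rw [← hdm, hm0, mul_zero]
      rw [hd0] at hd
      simp only [Nat.cast_zero] at hd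
      exact zero_ne_one (isUnit_zero_iff.mp hd)
    have hdF : F.natDegree = (M + 1) * m := by rw [hdeg, hdm]
    have hN1 : M + 1 - 1 = M := by omega
    have hT' : ∀ ψ : Polynomial A, ψ.Monic → ψ.natDegree = m →
        T ψ = ψ + Polynomial.C u * TschirnAux.Q F ψ M := by
      intro ψ hψ hψd
      rw [hT, hN1, TschirnAux.mod_div_eq_Q hF hdF hψ hψd]
    constructor
    · intro φ hφ hφd a a' hFa hai hFa' hai' hne
      rw [hN1] at hne ⊢
      have hTφ := hT' φ hφ hφd
      obtain ⟨hψM, hψd, hkey⟩ := TschirnAux.key_step hF hdF hφ hφd (u := u) hu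
      have h1 : a M = TschirnAux.Q F φ M :=
        TschirnAux.coeff_extract hF hdF hm hφ hφd a hFa hai
      rw [hTφ] at hFa'
      have h2 : a' M = TschirnAux.Q F (φ + Polynomial.C u * TschirnAux.Q F φ M) M :=
        TschirnAux.coeff_extract hF hdF hm hψM hψd a' hFa' hai'
      rw [h1, h2]
      exact hkey (h1 ▸ hne)
    · intro φ hφ hφd
      refine ⟨m, le_refl m, ?_⟩
      have main : ∀ n : ℕ, (T^[n] φ).Monic ∧ (T^[n] φ).natDegree = m ∧
          (TschirnAux.Q F (T^[n] φ) M = 0 ∨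
            (TschirnAux.Q F (T^[n] φ) M).degree < ((m - n : ℕ) : WithBot ℕ)) := by
        intro n
        induction n with
        | zero =>
          refine ⟨by simpa using hφ, by simpa using hφd, Or.inr ?_⟩
          simp only [Function.iterate_zero_apply, Nat.sub_zero]
          exact TschirnAux.degree_Q_lt hF hdF hφ hφd
        | succ n ih =>
          obtain ⟨h1, h2, h3⟩ := ih
          rw [Function.iterate_succ_apply', hT' _ h1 h2]
          by_cases hq0 : TschirnAux.Q F (T^[n] φ) M = 0
          · rw [hq0, mul_zero, add_zero]
            exact ⟨h1, h2, Or.inl hq0⟩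
          · obtain ⟨hψM, hψd, hkey⟩ := TschirnAux.key_step hF hdF h1 h2 (u := u) hu
            refine ⟨hψM, hψd, ?_⟩
            have hlt := hkey hq0
            by_cases hq1 : TschirnAux.Q F
                (T^[n] φ + Polynomial.C u * TschirnAux.Q F (T^[n] φ) M) M = 0
            · exact Or.inl hq1
            · right
              rcases h3 with h3 | h3
              · exact absurd h3 hq0
              rw [Polynomial.degree_eq_natDegree hq1] at hlt ⊢
              rw [Polynomial.degree_eq_natDegree hq0] at hlt h3
              rw [Nat.cast_lt] at hlt ⊢
              rw [Nat.cast_lt] at h3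
              omega
      obtain ⟨h1, h2, h3⟩ := main m
      have hq0 : TschirnAux.Q F (T^[m] φ) M = 0 := by
        rcases h3 with h | h
        · exact h
        · by_contra hne
          rw [Polynomial.degree_eq_natDegree hne, Nat.sub_self, Nat.cast_lt] at h
          omega
      refine ⟨h1, h2, ?_⟩
      have hres := (TschirnAux.Q_eq_zero_iff hF h1 h2).mp hq0
      have hdd : d - m = M * m := by
        have hd2 : d = M * m + m := by rw [← hdm]; ring
        rw [hd2, Nat.add_sub_cancel]
      rw [hdd]
      exact hres
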